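/- Let μ be a probability measure on ℝ^p absolutely continuous with respect to Lebesgue measure with everywhere positive density, and let S ⊆ ℝ^p have infinite Lebesgue measure with μ(S) = 1. Then for every β ∈ (0,1) there exists a Borel set B ⊆ S with μ(B) = β and finite Lebesgue measure. -/

import Mathlib

open MeasureTheory Set Filter Topology

/-- For an absolutely continuous probability measure on `ℝ^p` with everywhere positive
density, supported on a set `S` of infinite Lebesgue measure, every `β ∈ (0,1)` is
attained by a Borel subset of `S` of finite Lebesgue measure. -/
theorem beta_mode_exists (p : ℕ) (μ : Measure (Fin p → ℝ)) [IsProbabilityMeasure μ]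
    (f : (Fin p → ℝ) → ENNReal) (hf : Measurable f) (hfpos : ∀ x, 0 < f x)
    (hμ : μ = MeasureTheory.volume.withDensity f)
    (S : Set (Fin p → ℝ)) (hSm : MeasurableSet S)
    (hSvol : MeasureTheory.volume S = ⊤) (hSμ : μ S = 1)
    (β : ℝ) (hβ : β ∈ Set.Ioo (0:ℝ) 1) :
    ∃ B : Set (Fin p → ℝ), MeasurableSet B ∧ B ⊆ S ∧
      μ B = ENNReal.ofReal β ∧ MeasureTheory.volume B < ⊤ := by
  obtain ⟨hβ0, hβ1⟩ := hβ
  -- the case p = 0 is impossible since then the whole space has volume 1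
  rcases Nat.eq_zero_or_pos p with hp | hp
  · exfalso
    subst hp
    have h1 : (volume : Measure (Fin 0 → ℝ)) Set.univ = 1 := by
      simp [MeasureTheory.volume_pi, Measure.pi_univ]
    have h2 : (volume : Measure (Fin 0 → ℝ)) S ≤ 1 := h1 ▸ measure_mono (subset_univ S)
    rw [hSvol] at h2
    simp at h2
  haveI : Nonempty (Fin p) := ⟨⟨0, hp⟩⟩
  haveI : Nontrivial (Fin p → ℝ) := inferInstance
  have hac : μ ≪ volume := by
    rw [hμ]; exact withDensity_absolutelyContinuous _ _
  -- spheres (hence singletons) are null for μ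
  have hsph : ∀ (x : Fin p → ℝ) (r : ℝ), μ (Metric.sphere x r) = 0 := fun x r =>
    hac (Measure.addHaar_sphere volume x r)
  have hsing : ∀ x : Fin p → ℝ, μ {x} = 0 := fun x => by
    have := hsph x 0
    rwa [Metric.sphere_zero] at this
  set G : ℝ → ENNReal := fun r => μ (S ∩ Metric.closedBall 0 r) with hGdef
  have hGmono : Monotone G := fun a b hab =>
    measure_mono (inter_subset_inter_right _ (Metric.closedBall_subset_closedBall hab))
  have hGfin : ∀ r, G r ≠ ⊤ := fun r => measure_ne_top μ _
  set g : ℝ → ℝ := fun r => (G r).toReal with hgdef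
  have hgmono : Monotone g := fun a b hab =>
    ENNReal.toReal_mono (hGfin b) (hGmono hab)
  have hg0 : g 0 = 0 := by
    have : G 0 = 0 := by
      have h1 : G 0 ≤ μ {(0 : Fin p → ℝ)} := by
        apply measure_mono
        intro x hx
        have := hx.2
        simpa [Metric.closedBall_zero] using this
      simpa [hsing] using le_antisymm (le_trans h1 (le_of_eq (hsing _))) zero_le
    simp [hgdef, this]
  -- find a natural number R with β < g R
  have hUnion : Tendsto (fun n : ℕ => G n) atTop (𝓝 (μ S)) := by
    have hmono : Monotone fun n : ℕ => S ∩ Metric.closedBall (0 : Fin p → ℝ) n := fun a b hab =>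
      inter_subset_inter_right _ (Metric.closedBall_subset_closedBall (by exact_mod_cast hab))
    have := tendsto_measure_iUnion_atTop (μ := μ) hmono
    rwa [← inter_iUnion, Metric.iUnion_closedBall_nat, inter_univ] at this
  have hofβ : ENNReal.ofReal β < 1 := by
    rw [← ENNReal.ofReal_one]
    exact ENNReal.ofReal_lt_ofReal_iff_of_nonneg hβ0.le |>.2 hβ1
  obtain ⟨R, hR⟩ : ∃ R : ℕ, ENNReal.ofReal β < G R := by
    rw [hSμ] at hUnion
    have := hUnion.eventually (eventually_gt_nhds hofβ)
    exact this.exists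
  have hβR : β < g R := by
    have := (ENNReal.ofReal_lt_iff_lt_toReal hβ0.le (hGfin R)).1 hR
    simpa [hgdef] using this
  -- continuity of g
  have hgcont : Continuous g := by
    rw [continuous_iff_continuousAt]
    intro r₀
    rw [ContinuousAt, tendsto_order]
    constructor
    · -- left side
      intro a ha
      rcases le_or_gt r₀ 0 with h0 | h0
      · -- g r₀ = 0, so a < 0 ≤ g r always
        have : g r₀ = 0 := le_antisymm (hg0 ▸ hgmono h0) ENNReal.toReal_nonneg
        rw [this] at ha
        exact Eventually.of_forall fun r => lt_of_lt_of_le ha ENNReal.toReal_nonneg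
      · -- find r' < r₀ with a < g r'
        have hball : μ (S ∩ Metric.ball 0 r₀) = G r₀ := by
          apply le_antisymm (measure_mono (inter_subset_inter_right _ Metric.ball_subset_closedBall))
          calc G r₀ ≤ μ ((S ∩ Metric.ball 0 r₀) ∪ Metric.sphere 0 r₀) := by
                apply measure_mono
                rintro x ⟨hxS, hxb⟩
                rw [Metric.mem_closedBall] at hxb
                rcases lt_or_eq_of_le hxb with h | h
                · exact Or.inl ⟨hxS, Metric.mem_ball.2 h⟩
                · exact Or.inr (by rwa [Metric.mem_sphere])
            _ ≤ μ (S ∩ Metric.ball 0 r₀) + μ (Metric.sphere 0 r₀) := measure_union_le _ _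
            _ = μ (S ∩ Metric.ball 0 r₀) := by rw [hsph, add_zero]
        -- increasing sequence of closed balls exhausting the open ball
        set s : ℕ → Set (Fin p → ℝ) := fun n => S ∩ Metric.closedBall 0 (r₀ - r₀ / (n + 2)) with hs
        have hsmono : Monotone s := by
          intro m n hmn
          apply inter_subset_inter_right
          apply Metric.closedBall_subset_closedBall
          have : r₀ / (n + 2) ≤ r₀ / (m + 2) := by
            apply div_le_div_of_nonneg_left h0.le (by positivity)
            exact_mod_cast by omega
          linarith
        have hsunion : ⋃ n, s n = S ∩ Metric.ball 0 r₀ := by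
          apply Subset.antisymm
          · apply iUnion_subset
            intro n
            apply inter_subset_inter_right
            intro x hx
            rw [Metric.mem_closedBall] at hx
            rw [Metric.mem_ball]
            have : (0:ℝ) < r₀ / (n + 2) := by positivity
            linarith
          · rintro x ⟨hxS, hxb⟩
            rw [Metric.mem_ball] at hxb
            have hlim : Tendsto (fun n : ℕ => r₀ - r₀ / (n + 2)) atTop (𝓝 (r₀ - 0)) := by
              apply Tendsto.const_sub
              apply Tendsto.div_atTop tendsto_const_nhds
              exact tendsto_atTop_add_const_right _ _ tendsto_natCast_atTop_atTop
            rw [sub_zero] at hlim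
            have := hlim.eventually (eventually_gt_nhds hxb)
            obtain ⟨n, hn⟩ := this.exists
            exact mem_iUnion.2 ⟨n, hxS, Metric.mem_closedBall.2 hn.le⟩
        have htend : Tendsto (fun n => μ (s n)) atTop (𝓝 (G r₀)) := by
          have := tendsto_measure_iUnion_atTop (μ := μ) hsmono
          rwa [hsunion, hball] at this
        have htendR : Tendsto (fun n : ℕ => g (r₀ - r₀ / (n + 2))) atTop (𝓝 (g r₀)) :=
          (ENNReal.tendsto_toReal (hGfin r₀)).comp htend
        obtain ⟨n, hn⟩ := (htendR.eventually (eventually_gt_nhds ha)).exists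
        have hrn : r₀ - r₀ / (n + 2) < r₀ := by
          have : (0:ℝ) < r₀ / (n + 2) := by positivity
          linarith
        filter_upwards [eventually_gt_nhds hrn] with r hr
        exact lt_of_lt_of_le hn (hgmono hr.le)
    · -- right side
      intro b hb
      set s : ℕ → Set (Fin p → ℝ) := fun n => S ∩ Metric.closedBall 0 (r₀ + 1 / (n + 1)) with hs
      have hsanti : Antitone s := by
        intro m n hmn
        apply inter_subset_inter_right
        apply Metric.closedBall_subset_closedBall
        have : (1:ℝ) / (n + 1) ≤ 1 / (m + 1) := by
          apply div_le_div_of_nonneg_left one_pos.le (by positivity)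
          exact_mod_cast by omega
        linarith
      have hsinter : ⋂ n, s n = S ∩ Metric.closedBall 0 r₀ := by
        apply Subset.antisymm
        · intro x hx
          have hx0 := mem_iInter.1 hx
          refine ⟨(hx0 0).1, ?_⟩
          rw [Metric.mem_closedBall]
          by_contra hgt
          push_neg at hgt
          have hlim : Tendsto (fun n : ℕ => r₀ + 1 / (n + 1)) atTop (𝓝 (r₀ + 0)) := by
            apply Tendsto.const_add
            apply Tendsto.div_atTop tendsto_const_nhds
            exact tendsto_atTop_add_const_right _ _ tendsto_natCast_atTop_atTop
          rw [add_zero] at hlim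
          obtain ⟨n, hn⟩ := (hlim.eventually (eventually_lt_nhds hgt)).exists
          have := (hx0 n).2
          rw [Metric.mem_closedBall] at this
          linarith
        · apply subset_iInter
          intro n
          apply inter_subset_inter_right
          apply Metric.closedBall_subset_closedBall
          have : (0:ℝ) < 1 / ((n:ℝ) + 1) := by positivity
          linarith
      have htend : Tendsto (fun n => μ (s n)) atTop (𝓝 (G r₀)) := by
        have := tendsto_measure_iInter_atTop (μ := μ)
          (fun n => (hSm.inter measurableSet_closedBall).nullMeasurableSet)
          hsanti ⟨0, measure_ne_top μ _⟩
        rwa [hsinter] at this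
      have htendR : Tendsto (fun n : ℕ => g (r₀ + 1 / (n + 1))) atTop (𝓝 (g r₀)) :=
        (ENNReal.tendsto_toReal (hGfin r₀)).comp htend
      obtain ⟨n, hn⟩ := (htendR.eventually (eventually_lt_nhds hb)).exists
      have hrn : r₀ < r₀ + 1 / (n + 1) := by
        have : (0:ℝ) < 1 / ((n:ℝ) + 1) := by positivity
        linarith
      filter_upwards [eventually_lt_nhds hrn] with r hr
      exact lt_of_le_of_lt (hgmono hr.le) hn
  -- intermediate value theorem
  have hmem : β ∈ Icc (g 0) (g (R : ℝ)) := ⟨by rw [hg0]; exact hβ0.le, hβR.le⟩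
  have hR0 : (0:ℝ) ≤ R := Nat.cast_nonneg R
  obtain ⟨r, hr, hgr⟩ := intermediate_value_Icc hR0 hgcont.continuousOn hmem
  refine ⟨S ∩ Metric.closedBall 0 r, hSm.inter measurableSet_closedBall,
    inter_subset_left, ?_, ?_⟩
  · have : (G r).toReal = β := hgr
    rw [← this, ENNReal.ofReal_toReal (hGfin r)]
  · calc volume (S ∩ Metric.closedBall (0 : Fin p → ℝ) r)
        ≤ volume (Metric.closedBall (0 : Fin p → ℝ) r) := measure_mono inter_subset_right
      _ < ⊤ := (ProperSpace.isCompact_closedBall 0 r).measure_lt_top
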